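/- Let f : ℝ^m × ℝ^n → ℝ be ℓ-smooth with f(x,·) μ-strongly concave on a convex bounded set Y, and let Φ(x) = max_{y ∈ Y} f(x,y), y*(x) = argmax_{y∈Y} f(x,y). Then Φ is differentiable with ∇Φ(x) = ∇_x f(x, y*(x)), and ∇Φ is (ℓ + κℓ)-Lipschitz where κ = ℓ/μ. -/

import Mathlib

open Set Filter Topology
open scoped RealInnerProductSpace

variable {E : Type*} [NormedAddCommGroup E] [InnerProductSpace ℝ E] [CompleteSpace E]

/-- Mean value: bounded gradient gives Lipschitz bound. -/
lemma my_aux_lip (h : E → ℝ) (G : E → E) (C : ℝ)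
    (hG : ∀ z, HasGradientAt h (G z) z) (hb : ∀ z, ‖G z‖ ≤ C)
    (a b : E) : ‖h b - h a‖ ≤ C * ‖b - a‖ := by
  apply convex_univ.norm_image_sub_le_of_norm_hasFDerivWithin_le
    (f' := fun z => InnerProductSpace.toDual ℝ E (G z))
    (fun z _ => (hG z).hasFDerivAt.hasFDerivWithinAt)
    (fun z _ => by simpa using hb z) (mem_univ a) (mem_univ b)

/-- Quadratic upper bound from Lipschitz-type gradient bound along the segment. -/
lemma my_aux_quad (h : E → ℝ) (G : E → E) (L : ℝ)
    (hG : ∀ z, HasGradientAt h (G z) z)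
    (a b : E) (hb : ∀ z, ‖G z - G a‖ ≤ L * ‖z - a‖) :
    ‖h b - h a - ⟪G a, b - a⟫‖ ≤ (L * ‖b - a‖) * ‖b - a‖ := by
  have hL : 0 ≤ L * ‖b - a‖ := by
    rcases eq_or_ne b a with rfl | hba
    · simp
    · have h0 : 0 < ‖b - a‖ := by
        rw [norm_pos_iff, sub_ne_zero]; exact hba
      have := (norm_nonneg (G b - G a)).trans (hb b)
      positivity
  have key := (convex_segment a b).norm_image_sub_le_of_norm_hasFDerivWithin_le'
    (f := h) (f' := fun z => InnerProductSpace.toDual ℝ E (G z))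
    (φ := InnerProductSpace.toDual ℝ E (G a)) (C := L * ‖b - a‖)
    (fun z _ => (hG z).hasFDerivAt.hasFDerivWithinAt)
    (fun z hz => ?_) (left_mem_segment ℝ a b) (right_mem_segment ℝ a b)
  · simpa [InnerProductSpace.toDual_apply_apply] using key
  · rw [← map_sub, LinearIsometryEquiv.norm_map]
    refine (hb z).trans ?_
    rcases eq_or_ne b a with rfl | hba
    · simp at hz; simp [hz]
    have : ‖z - a‖ ≤ ‖b - a‖ := by
      rw [segment_eq_image'] at hz
      obtain ⟨t, ht, rfl⟩ := hz
      rw [add_sub_cancel_left, norm_smul, Real.norm_eq_abs, abs_of_nonneg ht.1]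
      nlinarith [norm_nonneg (b - a), ht.2]
    rcases le_or_gt L 0 with hL0 | hL0
    · nlinarith [norm_nonneg (z - a)]
    · nlinarith

/-- Quadratic growth at the maximizer of a strongly concave function. -/
lemma my_aux_growth {F : Type*} [NormedAddCommGroup F] [InnerProductSpace ℝ F]
    (Y : Set F) (μ : ℝ) (g : F → ℝ) (hc : StrongConcaveOn Y μ g)
    (y0 : F) (hy0 : y0 ∈ Y) (hmax : IsMaxOn g Y y0) :
    ∀ y ∈ Y, g y + μ / 2 * ‖y - y0‖ ^ 2 ≤ g y0 := by
  intro y hy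
  have key : ∀ a : ℝ, 0 < a → a < 1 → g y + (1 - a) * (μ / 2 * ‖y - y0‖ ^ 2) ≤ g y0 := by
    intro a ha0 ha1
    set c := μ / 2 * ‖y - y0‖ ^ 2 with hcdef
    have h2 := hc.2 hy hy0 ha0.le (by linarith : (0:ℝ) ≤ 1 - a) (by ring)
    have h3 : a • y + (1 - a) • y0 ∈ Y := hc.1 hy hy0 ha0.le (by linarith) (by ring)
    have h4 : g (a • y + (1 - a) • y0) ≤ g y0 := hmax h3
    simp only [smul_eq_mul] at h2
    have h5 : a * (g y + (1 - a) * c) ≤ a * g y0 := by simp only [c]; nlinarith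
    exact (mul_le_mul_iff_right₀ ha0).mp h5
  set c := μ / 2 * ‖y - y0‖ ^ 2 with hcdef
  have hlim : Tendsto (fun a : ℝ => g y + (1 - a) * c) (𝓝[>] (0:ℝ)) (𝓝 (g y + c)) := by
    have hcont : Continuous fun a : ℝ => g y + (1 - a) * c := by continuity
    have := (hcont.tendsto 0).mono_left (nhdsWithin_le_nhds : 𝓝[>] (0:ℝ) ≤ 𝓝 0)
    simpa using this
  refine le_of_tendsto hlim ?_
  filter_upwards [Ioo_mem_nhdsGT_of_mem (Set.mem_Ico.2 ⟨le_refl (0:ℝ), one_pos⟩)] with a ha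
  exact key a ha.1 ha.2

/-- In the nonconvex-strongly-concave setting, `Φ(x) = max_{y∈Y} f x y`
is differentiable with `∇Φ(x) = ∇_x f(x, y*(x))`, and `∇Φ` is `(ℓ + κℓ)`-Lipschitz
with `κ = ℓ/μ`. -/
theorem statement1 {m n : ℕ} (f : EuclideanSpace ℝ (Fin m) → EuclideanSpace ℝ (Fin n) → ℝ)
    (ℓ μ : ℝ) (hℓ : 0 < ℓ) (hμ : 0 < μ)
    (Y : Set (EuclideanSpace ℝ (Fin n))) (hYconv : Convex ℝ Y) (hYcomp : IsCompact Y)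
    (hYne : Y.Nonempty)
    (gx : EuclideanSpace ℝ (Fin m) → EuclideanSpace ℝ (Fin n) → EuclideanSpace ℝ (Fin m))
    (gy : EuclideanSpace ℝ (Fin m) → EuclideanSpace ℝ (Fin n) → EuclideanSpace ℝ (Fin n))
    (hgx : ∀ x y, HasGradientAt (fun x' => f x' y) (gx x y) x)
    (hgy : ∀ x y, HasGradientAt (fun y' => f x y') (gy x y) y)
    (hsmooth : ∀ x x' y y',
      ‖gx x y - gx x' y'‖ ≤ ℓ * (‖x - x'‖ + ‖y - y'‖) ∧
      ‖gy x y - gy x' y'‖ ≤ ℓ * (‖x - x'‖ + ‖y - y'‖))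
    (hconc : ∀ x, StrongConcaveOn Y μ (f x))
    (Φ : EuclideanSpace ℝ (Fin m) → ℝ) (hΦ : ∀ x, Φ x = sSup (f x '' Y))
    (ystar : EuclideanSpace ℝ (Fin m) → EuclideanSpace ℝ (Fin n))
    (hystar : ∀ x, ystar x ∈ Y ∧ IsMaxOn (f x) Y (ystar x)) :
    (∀ x, HasGradientAt Φ (gx x (ystar x)) x) ∧
    (∀ x x', ‖gx x (ystar x) - gx x' (ystar x')‖ ≤ (ℓ + (ℓ / μ) * ℓ) * ‖x - x'‖) := by
  -- Φ x = f x (ystar x)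
  have hΦeq : ∀ x, Φ x = f x (ystar x) := by
    intro x
    rw [hΦ x]
    refine IsGreatest.csSup_eq ⟨mem_image_of_mem _ (hystar x).1, ?_⟩
    rintro v ⟨y, hy, rfl⟩
    exact (hystar x).2 hy
  -- the argmax map is (ℓ/μ)-Lipschitz
  have hlipY : ∀ x x', ‖ystar x - ystar x'‖ ≤ ℓ / μ * ‖x - x'‖ := by
    intro x x'
    set y1 := ystar x
    set y2 := ystar x'
    rcases eq_or_ne y1 y2 with h0 | h0
    · rw [h0, sub_self, norm_zero]; positivity
    have hd : 0 < ‖y1 - y2‖ := by rw [norm_pos_iff, sub_ne_zero]; exact h0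
    have g1 := my_aux_growth Y μ (f x) (hconc x) y1 (hystar x).1 (hystar x).2 y2 (hystar x').1
    have g2 := my_aux_growth Y μ (f x') (hconc x') y2 (hystar x').1 (hystar x').2 y1 (hystar x).1
    rw [norm_sub_rev] at g1
    have hmv : ‖(f x y1 - f x' y1) - (f x y2 - f x' y2)‖ ≤ (ℓ * ‖x - x'‖) * ‖y1 - y2‖ := by
      apply my_aux_lip (fun y => f x y - f x' y) (fun y => gy x y - gy x' y) (ℓ * ‖x - x'‖)
      · intro z
        have h1 := (hgy x z).hasFDerivAt
        have h2 := (hgy x' z).hasFDerivAt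
        have h3 := h1.sub h2
        rw [← map_sub] at h3
        exact (hasGradientAt_iff_hasFDerivAt).2 h3
      · intro z
        have := (hsmooth x x' z z).2
        simpa using this
    have hmv' : (f x y1 - f x' y1) - (f x y2 - f x' y2) ≤ (ℓ * ‖x - x'‖) * ‖y1 - y2‖ :=
      (le_abs_self _).trans (by rwa [Real.norm_eq_abs] at hmv)
    have hkey : μ * ‖y1 - y2‖ ≤ ℓ * ‖x - x'‖ := by nlinarith
    rw [div_mul_eq_mul_div, le_div_iff₀ hμ]
    nlinarith
  -- quadratic bound in x for fixed y
  have hquadx : ∀ (y : EuclideanSpace ℝ (Fin n)) (x x0 : EuclideanSpace ℝ (Fin m)),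
      ‖f x0 y - f x y - ⟪gx x y, x0 - x⟫‖ ≤ (ℓ * ‖x0 - x‖) * ‖x0 - x‖ := by
    intro y x x0
    apply my_aux_quad (fun z => f z y) (fun z => gx z y) ℓ (fun z => hgx z y)
    intro z
    have := (hsmooth z x y y).1
    simpa using this
  constructor
  · -- differentiability
    intro x
    set g := gx x (ystar x) with hg
    set C := ℓ * (1 + ℓ / μ) with hC
    have hCpos : 0 < C := by positivity
    have key : ∀ x0, ‖Φ x0 - Φ x - ⟪g, x0 - x⟫‖ ≤ C * (‖x0 - x‖ * ‖x0 - x‖) := by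
      intro x0
      have hq1 := hquadx (ystar x) x x0
      have hq2 := hquadx (ystar x0) x x0
      rw [Real.norm_eq_abs, abs_le] at hq1 hq2
      -- lower bound
      have low : Φ x + ⟪g, x0 - x⟫ - (ℓ * ‖x0 - x‖) * ‖x0 - x‖ ≤ Φ x0 := by
        have h1 : f x (ystar x) + ⟪g, x0 - x⟫ - (ℓ * ‖x0 - x‖) * ‖x0 - x‖ ≤ f x0 (ystar x) := by
          nlinarith [hq1.1]
        have h2 : f x0 (ystar x) ≤ f x0 (ystar x0) := (hystar x0).2 (hystar x).1
        rw [hΦeq x, hΦeq x0]; linarith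
      -- upper bound
      have hdiff : ‖gx x (ystar x0) - g‖ ≤ ℓ * (ℓ / μ * ‖x0 - x‖) := by
        have h1 := (hsmooth x x (ystar x0) (ystar x)).1
        have h2 := hlipY x0 x
        calc ‖gx x (ystar x0) - g‖ ≤ ℓ * (‖x - x‖ + ‖ystar x0 - ystar x‖) := h1
          _ = ℓ * ‖ystar x0 - ystar x‖ := by rw [sub_self, norm_zero, zero_add]
          _ ≤ ℓ * (ℓ / μ * ‖x0 - x‖) := by
              exact mul_le_mul_of_nonneg_left h2 hℓ.le
      have hcs : ⟪gx x (ystar x0) - g, x0 - x⟫ ≤ (ℓ * (ℓ / μ * ‖x0 - x‖)) * ‖x0 - x‖ :=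
        (real_inner_le_norm _ _).trans
          (mul_le_mul_of_nonneg_right hdiff (norm_nonneg _))
      have hsplit : ⟪gx x (ystar x0), x0 - x⟫ = ⟪g, x0 - x⟫ + ⟪gx x (ystar x0) - g, x0 - x⟫ := by
        rw [inner_sub_left]; ring
      have up : Φ x0 ≤ Φ x + ⟪g, x0 - x⟫ + C * (‖x0 - x‖ * ‖x0 - x‖) := by
        have h1 : f x0 (ystar x0) ≤
            f x (ystar x0) + ⟪gx x (ystar x0), x0 - x⟫ + (ℓ * ‖x0 - x‖) * ‖x0 - x‖ := by
          nlinarith [hq2.2]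
        have h2 : f x (ystar x0) ≤ f x (ystar x) := (hystar x).2 (hystar x0).1
        rw [hΦeq x, hΦeq x0]
        rw [hsplit] at h1
        have expand : C * (‖x0 - x‖ * ‖x0 - x‖) =
            (ℓ * ‖x0 - x‖) * ‖x0 - x‖ + (ℓ * (ℓ / μ * ‖x0 - x‖)) * ‖x0 - x‖ := by
          rw [hC]; ring
        linarith [hcs, expand ▸ le_refl (C * (‖x0 - x‖ * ‖x0 - x‖))]
      rw [Real.norm_eq_abs, abs_le]
      constructor
      · have expand : C * (‖x0 - x‖ * ‖x0 - x‖) ≥ (ℓ * ‖x0 - x‖) * ‖x0 - x‖ := by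
          rw [hC]
          have : 0 ≤ (ℓ * (ℓ / μ)) * (‖x0 - x‖ * ‖x0 - x‖) := by positivity
          nlinarith
        linarith
      · linarith
    rw [hasGradientAt_iff_hasFDerivAt, hasFDerivAt_iff_isLittleO_nhds_zero,
      Asymptotics.isLittleO_iff]
    intro c hc
    have hball : Metric.ball (0 : EuclideanSpace ℝ (Fin m)) (c / C) ∈ 𝓝 0 :=
      Metric.ball_mem_nhds 0 (by positivity)
    filter_upwards [hball] with h hh
    have h1 := key (x + h)
    rw [add_sub_cancel_left] at h1
    have h2 : ‖h‖ < c / C := by rwa [Metric.mem_ball, dist_zero_right] at hh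
    have h3 : ‖h‖ * C < c := (lt_div_iff₀ hCpos).mp h2
    simp only [InnerProductSpace.toDual_apply_apply]
    calc ‖Φ (x + h) - Φ x - ⟪g, h⟫‖ ≤ C * (‖h‖ * ‖h‖) := h1
      _ ≤ c * ‖h‖ := by nlinarith [norm_nonneg h]
  · -- Lipschitz bound
    intro x x'
    have h1 := (hsmooth x x' (ystar x) (ystar x')).1
    have h2 := hlipY x x'
    calc ‖gx x (ystar x) - gx x' (ystar x')‖
        ≤ ℓ * (‖x - x'‖ + ‖ystar x - ystar x'‖) := h1
      _ ≤ (ℓ + ℓ / μ * ℓ) * ‖x - x'‖ := by nlinarith
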